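/- For every d ∈ ω and every bit string η ∈ 2^{d+1}, there exists a quantifier-free formula ψ(x; y_1,...,y_d) in the language {<} such that the family C^o_ψ = {ψ(ℚ; a_1,...,a_d) : a_1 < ... < a_d in ℚ} of sets defined by ψ with increasing parameters is finitely characterized by η. -/

import Mathlib

open Set

def traceOn {X : Type*} (C : Set (Set X)) (A : Set X) : Set (Set X) :=
  {s | ∃ c ∈ C, s = c ∩ A}

def Shatters {X : Type*} (C : Set (Set X)) (A : Set X) : Prop :=
  ∀ s ⊆ A, ∃ c ∈ C, c ∩ A = s

def VCDimEq {X : Type*} (C : Set (Set X)) (d : ℕ) : Prop :=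
  (∃ A : Set X, A.Finite ∧ A.ncard = d ∧ Shatters C A) ∧
    ∀ A : Set X, A.Finite → Shatters C A → A.ncard ≤ d

def Phi (d n : ℕ) : ℕ := if d ≤ n then ∑ i ∈ Finset.range (d + 1), n.choose i else 2 ^ n

def Induces {X : Type*} [LinearOrder X] {d : ℕ} (c : Set X) (η : Fin (d + 1) → Bool)
    (B : Set X) : Prop :=
  ∃ b : Fin (d + 1) → X, StrictMono b ∧ (∀ i, b i ∈ B) ∧ ∀ i, b i ∈ c ↔ η i = true

/-- Terms of the language {<} with one object variable `x` and `n` parameter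
variables `y i`. -/
inductive Trm (n : ℕ) : Type
  | x : Trm n
  | y : Fin n → Trm n

/-- Quantifier-free formulas of the language {<} (with equality), partitioned
with single object variable `x` and parameter variables `y 1, ..., y n`. -/
inductive QF (n : ℕ) : Type
  | lt : Trm n → Trm n → QF n
  | eq : Trm n → Trm n → QF n
  | not : QF n → QF n
  | and : QF n → QF n → QF n
  | or : QF n → QF n → QF n

def Trm.eval {n : ℕ} (a : ℚ) (p : Fin n → ℚ) : Trm n → ℚ
  | .x => a
  | .y i => p i

/-- Satisfaction in (ℚ, <) with object value `a` and parameters `p`. -/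
def QF.Sat {n : ℕ} (a : ℚ) (p : Fin n → ℚ) : QF n → Prop
  | .lt t₁ t₂ => t₁.eval a p < t₂.eval a p
  | .eq t₁ t₂ => t₁.eval a p = t₂.eval a p
  | .not φ => ¬ φ.Sat a p
  | .and φ ψ => φ.Sat a p ∧ ψ.Sat a p
  | .or φ ψ => φ.Sat a p ∨ ψ.Sat a p

/-- The family of subsets of ℚ defined by φ with strictly increasing
parameters. -/
def defFam {n : ℕ} (φ : QF n) : Set (Set ℚ) :=
  {s | ∃ p : Fin n → ℚ, StrictMono p ∧ s = {a : ℚ | φ.Sat a p}}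

namespace FinCharProof

/-- An always-false formula. -/
def qfFalse (n : ℕ) : QF n := .lt .x .x

lemma sat_qfFalse {n : ℕ} (a : ℚ) (p : Fin n → ℚ) : ¬ (qfFalse n).Sat a p := by
  simp [qfFalse, QF.Sat, Trm.eval]

/-- Finite disjunction. -/
def bigOr {n : ℕ} : {m : ℕ} → (Fin m → QF n) → QF n
  | 0, _ => qfFalse n
  | _ + 1, f => .or (f 0) (bigOr fun i => f i.succ)

lemma sat_bigOr {n : ℕ} (a : ℚ) (p : Fin n → ℚ) :
    ∀ {m : ℕ} (f : Fin m → QF n), (bigOr f).Sat a p ↔ ∃ i, (f i).Sat a p := by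
  intro m
  induction m with
  | zero =>
    intro f
    exact iff_of_false (sat_qfFalse a p) (by rintro ⟨i, _⟩; exact i.elim0)
  | succ m ih =>
    intro f
    show (f 0).Sat a p ∨ (bigOr fun i => f i.succ).Sat a p ↔ _
    rw [ih]
    constructor
    · rintro (h | ⟨i, h⟩)
      exacts [⟨0, h⟩, ⟨i.succ, h⟩]
    · rintro ⟨i, h⟩
      rcases Fin.eq_zero_or_eq_succ i with rfl | ⟨j, rfl⟩
      · exact Or.inl h
      · exact Or.inr ⟨j, h⟩

/-- Finite conjunction. -/
def bigAnd {n : ℕ} : {m : ℕ} → (Fin m → QF n) → QF n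
  | 0, _ => .not (qfFalse n)
  | _ + 1, f => .and (f 0) (bigAnd fun i => f i.succ)

lemma sat_bigAnd {n : ℕ} (a : ℚ) (p : Fin n → ℚ) :
    ∀ {m : ℕ} (f : Fin m → QF n), (bigAnd f).Sat a p ↔ ∀ i, (f i).Sat a p := by
  intro m
  induction m with
  | zero =>
    intro f
    exact iff_of_true (sat_qfFalse a p) (fun i => i.elim0)
  | succ m ih =>
    intro f
    show (f 0).Sat a p ∧ (bigAnd fun i => f i.succ).Sat a p ↔ _
    rw [ih]
    constructor
    · rintro ⟨h0, hs⟩ i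
      rcases Fin.eq_zero_or_eq_succ i with rfl | ⟨j, rfl⟩
      exacts [h0, hs j]
    · intro h
      exact ⟨h 0, fun j => h j.succ⟩

/-- `a` lies in the `j`-th open region determined by the increasing parameters
`p` (region `0` is below all parameters, region `d` above all of them). -/
def InRegion {d : ℕ} (p : Fin d → ℚ) (j : Fin (d + 1)) (a : ℚ) : Prop :=
  ∀ k : Fin d, if (k : ℕ) < (j : ℕ) then p k < a else a < p k

/-- Formula expressing membership in region `j`. -/
def regionF (d : ℕ) (j : Fin (d + 1)) : QF d :=
  bigAnd fun k : Fin d => if (k : ℕ) < (j : ℕ) then .lt (.y k) .x else .lt .x (.y k)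

lemma sat_regionF {d : ℕ} (j : Fin (d + 1)) (a : ℚ) (p : Fin d → ℚ) :
    (regionF d j).Sat a p ↔ InRegion p j a := by
  rw [regionF, sat_bigAnd]
  refine forall_congr' fun k => ?_
  by_cases h : (k : ℕ) < (j : ℕ) <;> simp [h, QF.Sat, Trm.eval]

/-- The semantic membership predicate for our formula: `a` is a member iff it
equals a parameter `p j` with `η (j+1-th bit) = true`, or lies in an open
region `j` with `η j = false`. -/
def MemF {d : ℕ} (η : Fin (d + 1) → Bool) (p : Fin d → ℚ) (a : ℚ) : Prop :=
  (∃ j : Fin (d + 1), η j = false ∧ InRegion p j a) ∨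
    (∃ j : Fin d, η j.castSucc = true ∧ a = p j)

/-- The formula associated to the pattern `η`. -/
def psi {d : ℕ} (η : Fin (d + 1) → Bool) : QF d :=
  .or (bigOr fun j : Fin (d + 1) => if η j = false then regionF d j else qfFalse d)
      (bigOr fun j : Fin d => if η j.castSucc = true then .eq .x (.y j) else qfFalse d)

lemma sat_psi {d : ℕ} (η : Fin (d + 1) → Bool) (a : ℚ) (p : Fin d → ℚ) :
    (psi η).Sat a p ↔ MemF η p a := by
  show (bigOr _).Sat a p ∨ (bigOr _).Sat a p ↔ _
  rw [sat_bigOr, sat_bigOr]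
  refine or_congr (exists_congr fun j => ?_) (exists_congr fun j => ?_)
  · by_cases h : η j = false <;>
      simp [h, sat_regionF, fun a p => (iff_false _).mpr (sat_qfFalse (n := d) a p)]
  · by_cases h : η j.castSucc = true <;>
      simp [h, QF.Sat, Trm.eval, fun a p => (iff_false _).mpr (sat_qfFalse (n := d) a p)]

lemma inRegion_unique {d : ℕ} {p : Fin d → ℚ} {j j' : Fin (d + 1)} {a : ℚ}
    (h : InRegion p j a) (h' : InRegion p j' a) : j = j' := by
  have key : ∀ {u v : Fin (d + 1)}, InRegion p u a → InRegion p v a →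
      (u : ℕ) < (v : ℕ) → False := by
    intro u v hu hv huv
    have hvd : (v : ℕ) ≤ d := Nat.lt_succ_iff.mp v.isLt
    set k : Fin d := ⟨(u : ℕ), lt_of_lt_of_le huv hvd⟩
    have h1 := hu k
    rw [if_neg (lt_irrefl _)] at h1
    have h2 := hv k
    rw [if_pos huv] at h2
    exact absurd (h1.trans h2) (lt_irrefl a)
  rcases lt_trichotomy ((j : ℕ)) ((j' : ℕ)) with hlt | heq | hgt
  · exact absurd (key h h' hlt) id
  · exact Fin.ext heq
  · exact absurd (key h' h hgt) id

lemma inRegion_ne {d : ℕ} {p : Fin d → ℚ} {j : Fin (d + 1)} {a : ℚ}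
    (h : InRegion p j a) (k : Fin d) : a ≠ p k := by
  have := h k
  split at this
  · exact (ne_of_gt this)
  · exact (ne_of_lt this)

lemma inRegion_total {d : ℕ} {p : Fin d → ℚ} (hp : StrictMono p) (a : ℚ) :
    (∃ k, a = p k) ∨ ∃ j, InRegion p j a := by
  by_cases he : ∃ k, a = p k
  · exact Or.inl he
  right
  push_neg at he
  by_cases hs : ∃ k : Fin d, a < p k
  · set S : Finset (Fin d) := Finset.univ.filter (fun k => a < p k) with hS
    have hSne : S.Nonempty := by
      obtain ⟨k, hk⟩ := hs
      exact ⟨k, by simp [hS, hk]⟩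
    set k₀ := S.min' hSne with hk₀
    have hk₀S : a < p k₀ := by
      have := S.min'_mem hSne
      simpa [hS] using this
    refine ⟨k₀.castSucc, fun k => ?_⟩
    rw [Fin.coe_castSucc]
    by_cases hk : (k : ℕ) < (k₀ : ℕ)
    · rw [if_pos hk]
      have hknS : k ∉ S := fun hmem => absurd (S.min'_le k hmem) (by
        rw [← hk₀]
        exact not_le_of_gt hk)
      have : ¬ a < p k := fun hlt => hknS (by simp [hS, hlt])
      exact lt_of_le_of_ne (not_lt.mp this) (Ne.symm (he k))
    · rw [if_neg hk]
      exact lt_of_lt_of_le hk₀S (hp.monotone (by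
        rw [Fin.le_def]; omega))
  · push_neg at hs
    refine ⟨Fin.last d, fun k => ?_⟩
    rw [if_pos (by simpa using k.isLt)]
    exact lt_of_le_of_ne (hs k) (Ne.symm (he k))

lemma memF_of_inRegion {d : ℕ} {η : Fin (d + 1) → Bool} {p : Fin d → ℚ}
    {j : Fin (d + 1)} {a : ℚ} (h : InRegion p j a) :
    MemF η p a ↔ η j = false := by
  constructor
  · rintro (⟨j', hj', hr⟩ | ⟨k, _, rfl⟩)
    · rwa [inRegion_unique h hr]
    · exact absurd rfl (inRegion_ne h k)
  · exact fun hj => Or.inl ⟨j, hj, h⟩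

lemma memF_of_eq {d : ℕ} {η : Fin (d + 1) → Bool} {p : Fin d → ℚ}
    (hp : Function.Injective p) (m : Fin d) :
    MemF η p (p m) ↔ η m.castSucc = true := by
  constructor
  · rintro (⟨j, _, hr⟩ | ⟨k, hk, hek⟩)
    · exact absurd rfl (inRegion_ne hr m)
    · rw [hp hek]; exact hk
  · exact fun h => Or.inr ⟨m, h, rfl⟩

/-- Soundness: a set defined by `psi η` with increasing parameters never
induces the pattern `η`. -/
lemma part1 {d : ℕ} (η : Fin (d + 1) → Bool) {p : Fin d → ℚ} (hp : StrictMono p)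
    {b : Fin (d + 1) → ℚ} (hb : StrictMono b)
    (hpat : ∀ i, MemF η p (b i) ↔ η i = true) : False := by
  have key : ∀ n : ℕ, ∀ h : n < d + 1, ∀ k : Fin d, (k : ℕ) < n → p k < b ⟨n, h⟩ := by
    intro n
    induction n with
    | zero => intro h k hk; omega
    | succ n ih =>
      intro h k hk
      have hn : n < d + 1 := Nat.lt_of_succ_lt h
      have hbb : b ⟨n, hn⟩ < b ⟨n + 1, h⟩ := hb (by simp [Fin.lt_def])
      rcases Nat.lt_or_ge (k : ℕ) n with hkn | hkn
      · exact (ih hn k hkn).trans hbb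
      · have hkeq : (k : ℕ) = n := le_antisymm (Nat.lt_succ_iff.mp hk) hkn
        have hnd : n < d := hkeq ▸ k.isLt
        rcases inRegion_total hp (b ⟨n, hn⟩) with ⟨m, hm⟩ | ⟨j, hj⟩
        · have hnm : n ≤ (m : ℕ) := by
            by_contra hlt
            push_neg at hlt
            have := ih hn m hlt
            rw [hm] at this
            exact absurd this (lt_irrefl _)
          calc p k ≤ p m := hp.monotone (by rw [Fin.le_def]; omega)
            _ = b ⟨n, hn⟩ := hm.symm
            _ < b ⟨n + 1, h⟩ := hbb
        · have hjn : n < (j : ℕ) := by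
            rcases Nat.lt_or_ge ((j : ℕ)) n with hj' | hj'
            · exfalso
              set k' : Fin d := ⟨(j : ℕ), lt_trans hj' hnd⟩
              have h1 := ih hn k' hj'
              have h2 := hj k'
              rw [if_neg (lt_irrefl _)] at h2
              exact absurd (h1.trans h2) (lt_irrefl _)
            · rcases Nat.eq_or_lt_of_le hj' with hj'' | hj''
              · exfalso
                have hje : j = ⟨n, hn⟩ := Fin.ext hj''.symm
                have h1 := memF_of_inRegion (η := η) hj
                have h2 := hpat ⟨n, hn⟩
                rw [hje] at h1
                rw [h1] at h2
                cases hη : η ⟨n, hn⟩ <;> simp [hη] at h2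
              · exact hj''
          have h3 := hj k
          rw [if_pos (hkeq ▸ hjn)] at h3
          exact h3.trans hbb
  have hall : ∀ k : Fin d, p k < b (Fin.last d) :=
    fun k => key d (Nat.lt_succ_self d) k k.isLt
  rcases inRegion_total hp (b (Fin.last d)) with ⟨m, hm⟩ | ⟨j, hj⟩
  · have := hall m
    rw [hm] at this
    exact absurd this (lt_irrefl _)
  · have hjd : j = Fin.last d := by
      by_contra hne
      have hjlt : (j : ℕ) < d := by
        have := Nat.lt_succ_iff.mp j.isLt
        rcases Nat.eq_or_lt_of_le this with h' | h'
        · exact absurd (Fin.ext (h'.trans (Fin.val_last d).symm)) hne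
        · exact h'
      set k' : Fin d := ⟨(j : ℕ), hjlt⟩
      have h1 := hj k'
      rw [if_neg (lt_irrefl _)] at h1
      exact absurd ((hall k').trans h1) (lt_irrefl _)
    have h1 := memF_of_inRegion (η := η) hj
    have h2 := hpat (Fin.last d)
    rw [hjd] at h1
    rw [h1] at h2
    cases hη : η (Fin.last d) <;> simp [hη] at h2

lemma not_iff_false_bool {P : Prop} {q : Bool} (h : ¬ (P ↔ q = false)) : P ↔ q = true := by
  cases q <;> simp at h ⊢ <;> tauto

/-- Building a strictly monotone (d+1)-tuple by prepending a value below the rest. -/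
lemma strictMono_cons {e : ℕ} {x : ℚ} {p' : Fin e → ℚ} (hp' : StrictMono p')
    (hx : ∀ k, x < p' k) : StrictMono (Fin.cons x p' : Fin (e + 1) → ℚ) := by
  intro i j hij
  rcases Fin.eq_zero_or_eq_succ j with rfl | ⟨j', rfl⟩
  · exact absurd hij (by simp [Fin.lt_def])
  · rw [Fin.cons_succ]
    rcases Fin.eq_zero_or_eq_succ i with rfl | ⟨i', rfl⟩
    · rw [Fin.cons_zero]; exact hx j'
    · rw [Fin.cons_succ]
      exact hp' (by rwa [Fin.succ_lt_succ_iff] at hij)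

/-- Shifting: for points above the first parameter, membership for `η` with
parameters `cons x p'` is membership for the shifted pattern with `p'`. -/
lemma memF_cons {e : ℕ} (η : Fin (e + 2) → Bool) (x : ℚ) (p' : Fin e → ℚ) {a : ℚ}
    (ha : x < a) :
    MemF η (Fin.cons x p') a ↔ MemF (fun i => η i.succ) p' a := by
  have hreg : ∀ j' : Fin (e + 1),
      InRegion (Fin.cons x p' : Fin (e + 1) → ℚ) j'.succ a ↔ InRegion p' j' a := by
    intro j'
    constructor
    · intro h k'
      have hthis := h k'.succ
      rw [Fin.cons_succ] at hthis
      by_cases hc : (k' : ℕ) < (j' : ℕ)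
      · rw [if_pos hc]
        rw [Fin.val_succ, Fin.val_succ, if_pos (by omega)] at hthis
        exact hthis
      · rw [if_neg hc]
        rw [Fin.val_succ, Fin.val_succ, if_neg (by omega)] at hthis
        exact hthis
    · intro h k
      induction k using Fin.cases with
      | zero =>
        rw [if_pos (by simp [Fin.val_succ]), Fin.cons_zero]
        exact ha
      | succ k' =>
        have hthis := h k'
        rw [Fin.cons_succ]
        by_cases hc : (k' : ℕ) < (j' : ℕ)
        · rw [Fin.val_succ, Fin.val_succ, if_pos (by omega)]
          rw [if_pos hc] at hthis
          exact hthis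
        · rw [Fin.val_succ, Fin.val_succ, if_neg (by omega)]
          rw [if_neg hc] at hthis
          exact hthis
  constructor
  · rintro (⟨j, hj, hr⟩ | ⟨j, hj, hje⟩)
    · induction j using Fin.cases with
      | zero =>
        exfalso
        have := hr 0
        rw [if_neg (by simp), Fin.cons_zero] at this
        exact absurd (ha.trans this) (lt_irrefl _)
      | succ j' =>
        exact Or.inl ⟨j', hj, (hreg j').mp hr⟩
    · induction j using Fin.cases with
      | zero =>
        exfalso
        rw [Fin.cons_zero] at hje
        exact absurd hje (ne_of_gt ha)
      | succ j' =>
        rw [Fin.cons_succ] at hje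
        refine Or.inr ⟨j', ?_, hje⟩
        rwa [← Fin.succ_castSucc] at hj
  · rintro (⟨j', hj', hr⟩ | ⟨j', hj', hje⟩)
    · exact Or.inl ⟨j'.succ, hj', (hreg j').mpr hr⟩
    · refine Or.inr ⟨j'.succ, ?_, by rw [Fin.cons_succ]; exact hje⟩
      rw [← Fin.succ_castSucc]
      exact hj'

/-- The easy case of completeness: if every point of `B` has membership bit
`¬ η 0`, then all of `B` can sit in region `0`. -/
lemma region0_case {d : ℕ} (η : Fin (d + 1) → Bool) (B s : Set ℚ) (hBf : B.Finite)
    (hT : ∀ b ∈ B, (b ∈ s ↔ η 0 = false)) (L : ℚ) (hL : ∀ b ∈ B, L < b) :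
    ∃ p : Fin d → ℚ, StrictMono p ∧ (∀ k, L < p k) ∧
      ∀ b ∈ B, (MemF η p b ↔ b ∈ s) := by
  obtain ⟨M₀, hM₀⟩ := hBf.bddAbove
  refine ⟨fun k => max M₀ L + 1 + (k : ℕ), ?_, ?_, ?_⟩
  · intro k k' hkk
    show max M₀ L + 1 + ((k : ℕ) : ℚ) < max M₀ L + 1 + ((k' : ℕ) : ℚ)
    have : ((k : ℕ) : ℚ) < ((k' : ℕ) : ℚ) := by
      exact_mod_cast (Fin.lt_def.mp hkk)
    linarith
  · intro k
    show L < max M₀ L + 1 + ((k : ℕ) : ℚ)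
    have h1 : L ≤ max M₀ L := le_max_right _ _
    have h2 : (0 : ℚ) ≤ ((k : ℕ) : ℚ) := Nat.cast_nonneg _
    linarith
  · intro b hb
    have hbM : ∀ k : Fin d, b < max M₀ L + 1 + (k : ℕ) := by
      intro k
      have h1 : b ≤ M₀ := hM₀ hb
      have h2 : M₀ ≤ max M₀ L := le_max_left _ _
      have h3 : (0 : ℚ) ≤ ((k : ℕ) : ℚ) := Nat.cast_nonneg _
      linarith
    have hr : InRegion (fun k : Fin d => max M₀ L + 1 + ((k : ℕ) : ℚ)) 0 b := by
      intro k
      rw [if_neg (by simp)]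
      exact hbM k
    rw [memF_of_inRegion hr]
    exact (hT b hb).symm

/-- Completeness: every finite trace avoiding `η` is realized. -/
lemma part2 : ∀ (d : ℕ) (η : Fin (d + 1) → Bool) (B s : Set ℚ), B.Finite → s ⊆ B →
    ¬ Induces s η B → ∀ L : ℚ, (∀ b ∈ B, L < b) →
    ∃ p : Fin d → ℚ, StrictMono p ∧ (∀ k, L < p k) ∧
      ∀ b ∈ B, (MemF η p b ↔ b ∈ s) := by
  intro d
  induction d with
  | zero =>
    intro η B s hBf hsB hInd L hL
    by_cases hT : ∀ b ∈ B, (b ∈ s ↔ η 0 = false)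
    · exact region0_case η B s hBf hT L hL
    · exfalso
      obtain ⟨b₀, hb₀⟩ := not_forall.mp hT
      obtain ⟨hb₀B, hb₀⟩ := Classical.not_imp.mp hb₀
      refine hInd ⟨fun _ => b₀, ?_, fun _ => hb₀B, fun i => ?_⟩
      · intro i j hij
        exfalso
        have h1 := i.isLt
        have h2 := j.isLt
        rw [Fin.lt_def] at hij
        omega
      · have hi : i = 0 := Fin.ext (by have := i.isLt; omega)
        rw [hi]
        exact not_iff_false_bool hb₀
  | succ e ih =>
    intro η B s hBf hsB hInd L hL
    by_cases hT : ∀ b ∈ B, (b ∈ s ↔ η 0 = false)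
    · exact region0_case η B s hBf hT L hL
    · have hTf : {b ∈ B | ¬ (b ∈ s ↔ η 0 = false)}.Finite :=
        hBf.subset (sep_subset _ _)
      have hTne : {b ∈ B | ¬ (b ∈ s ↔ η 0 = false)}.Nonempty := by
        obtain ⟨b₀, hb₀⟩ := not_forall.mp hT
        obtain ⟨hb₀B, hb₀⟩ := Classical.not_imp.mp hb₀
        exact ⟨b₀, hb₀B, hb₀⟩
      obtain ⟨bs, ⟨hbsB, hbsT⟩, hbsmin⟩ :=
        Set.exists_min_image _ id hTf hTne
      have hbss : bs ∈ s ↔ η 0 = true := not_iff_false_bool hbsT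
      set B' : Set ℚ := {b ∈ B | bs < b} with hB'
      set s' : Set ℚ := s ∩ B' with hs'
      have hInd' : ¬ Induces s' (fun i => η i.succ) B' := by
        rintro ⟨b', hmono, hmem, hpat⟩
        have hbslt : ∀ k, bs < b' k := fun k => (hmem k).2
        refine hInd ⟨Fin.cons bs b', strictMono_cons hmono hbslt, ?_, ?_⟩
        · intro i
          induction i using Fin.cases with
          | zero => rw [Fin.cons_zero]; exact hbsB
          | succ j => rw [Fin.cons_succ]; exact (hmem j).1
        · intro i
          induction i using Fin.cases with
          | zero => rw [Fin.cons_zero]; exact hbss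
          | succ j =>
            rw [Fin.cons_succ]
            have := hpat j
            rw [hs'] at this
            constructor
            · intro hmem'
              exact this.mp ⟨hmem', hmem j⟩
            · intro hη
              exact (this.mpr hη).1
      obtain ⟨p', hp'mono, hp'L, hp'mem⟩ :=
        ih (fun i => η i.succ) B' s' (hBf.subset (sep_subset _ _))
          (inter_subset_right) hInd' bs (fun b hb => hb.2)
      refine ⟨Fin.cons bs p', strictMono_cons hp'mono hp'L, ?_, ?_⟩
      · intro k
        induction k using Fin.cases with
        | zero => rw [Fin.cons_zero]; exact hL bs hbsB
        | succ j => rw [Fin.cons_succ]; exact (hL bs hbsB).trans (hp'L j)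
      · intro b hbB
        rcases lt_trichotomy b bs with hlt | heq | hgt
        · have hbnT : b ∉ {b ∈ B | ¬ (b ∈ s ↔ η 0 = false)} := by
            intro hmem
            exact absurd (hbsmin b hmem) (not_le_of_gt hlt)
          have hbs : b ∈ s ↔ η 0 = false := by
            by_contra hc
            exact hbnT ⟨hbB, hc⟩
          have hr : InRegion (Fin.cons bs p' : Fin (e + 1) → ℚ) 0 b := by
            intro k
            rw [if_neg (by simp)]
            induction k using Fin.cases with
            | zero => rw [Fin.cons_zero]; exact hlt
            | succ j => rw [Fin.cons_succ]; exact hlt.trans (hp'L j)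
          rw [memF_of_inRegion hr]
          exact hbs.symm
        · subst heq
          have hinj : Function.Injective (Fin.cons b p' : Fin (e + 1) → ℚ) :=
            (strictMono_cons hp'mono hp'L).injective
          have h0 : (Fin.cons b p' : Fin (e + 1) → ℚ) 0 = b := Fin.cons_zero _ _
          have hkey := memF_of_eq (η := η) hinj 0
          rw [Fin.castSucc_zero] at hkey
          rw [h0] at hkey
          exact hkey.trans hbss.symm
        · rw [memF_cons η bs p' hgt]
          have hbB' : b ∈ B' := ⟨hbB, hgt⟩
          rw [hp'mem b hbB']
          rw [hs']
          constructor
          · rintro ⟨h1, _⟩; exact h1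
          · intro h1; exact ⟨h1, hbB'⟩

end FinCharProof

/-- For every forbidden label η ∈ 2^{d+1} there is a quantifier-free order
formula ψ(x; y₁,...,y_d) whose family of increasing-parameter definable sets
is finitely characterized by η. -/
theorem exists_formula_finChar (d : ℕ) (η : Fin (d + 1) → Bool) :
    ∃ ψ : QF d, ∀ B : Set ℚ, B.Finite →
      traceOn (defFam ψ) B = {c : Set ℚ | c ⊆ B ∧ ¬ Induces c η B} := by
  classical
  refine ⟨FinCharProof.psi η, fun B hB => ?_⟩
  ext s
  simp only [traceOn, defFam, Set.mem_setOf_eq]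
  constructor
  · rintro ⟨c, ⟨p, hp, rfl⟩, rfl⟩
    refine ⟨inter_subset_right, ?_⟩
    rintro ⟨b, hbmono, hbB, hbpat⟩
    refine FinCharProof.part1 η hp hbmono fun i => ?_
    have h1 := hbpat i
    rw [← FinCharProof.sat_psi η (b i) p]
    rw [Set.mem_inter_iff] at h1
    constructor
    · intro hs; exact h1.mp ⟨hs, hbB i⟩
    · intro hη; exact (h1.mpr hη).1
  · rintro ⟨hsB, hInd⟩
    obtain ⟨L₀, hL₀⟩ := hB.bddBelow
    obtain ⟨p, hpmono, _, hpmem⟩ := FinCharProof.part2 d η B s hB hsB hInd (L₀ - 1)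
      (fun b hb => lt_of_lt_of_le (by linarith) (hL₀ hb))
    refine ⟨{a | (FinCharProof.psi η).Sat a p}, ⟨p, hpmono, rfl⟩, ?_⟩
    ext x
    simp only [Set.mem_inter_iff, Set.mem_setOf_eq, FinCharProof.sat_psi]
    constructor
    · intro hx
      exact ⟨(hpmem x (hsB hx)).mpr hx, hsB hx⟩
    · rintro ⟨hm, hxB⟩
      exact (hpmem x hxB).mp hm
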